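/- For any two distinct adjacent vertices [α] and [β] of the symplectic graph Sp(2ν,q), the number of vertices adjacent to both [α] and [β] is exactly q^{2ν-2}(q-1). -/

import Mathlib

open Matrix

/-- The standard nonsingular alternate matrix over `F` with `ν` diagonal blocks
`[[0,1],[-1,0]]`. -/
def sK (F : Type) [Field F] (ν : ℕ) : Matrix (Fin (2 * ν)) (Fin (2 * ν)) F :=
  Matrix.of fun i j =>
    if i.val % 2 = 0 ∧ j.val = i.val + 1 then (1 : F)
    else if j.val % 2 = 0 ∧ i.val = j.val + 1 then (-1 : F) else 0

/-- The symplectic graph `Sp(2ν, q)`: vertices are the one-dimensional subspaces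
of `F^(2ν)`, with `[α]` adjacent to `[β]` iff `α K βᵀ ≠ 0`. -/
def SpG (F : Type) [Field F] (ν : ℕ) :
    SimpleGraph (Projectivization F (Fin (2 * ν) → F)) :=
  SimpleGraph.fromRel fun x y => x.rep ⬝ᵥ ((sK F ν) *ᵥ y.rep) ≠ 0

namespace SpGAux

variable {F : Type} [Field F] {ν : ℕ}

def flip (ν : ℕ) (i : Fin (2 * ν)) : Fin (2 * ν) :=
  if h : i.val % 2 = 0 then ⟨i.val + 1, by have := i.isLt; omega⟩
  else ⟨i.val - 1, by have := i.isLt; omega⟩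

lemma sK_mulVec_even (v : Fin (2 * ν) → F) (i : Fin (2 * ν)) (h : i.val % 2 = 0)
    (h1 : i.val + 1 < 2 * ν) : (sK F ν *ᵥ v) i = v ⟨i.val + 1, h1⟩ := by
  show (fun j => sK F ν i j) ⬝ᵥ v = _
  rw [dotProduct, Finset.sum_eq_single (⟨i.val + 1, h1⟩ : Fin (2 * ν))]
  · simp [sK, h]
  · intro j _ hj
    have hz : sK F ν i j = 0 := by
      simp only [sK, of_apply]
      split_ifs with h2 h3
      · exact absurd (Fin.ext h2.2) hj
      · omega
      · rfl
    simp [hz]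
  · simp

lemma sK_mulVec_odd (v : Fin (2 * ν) → F) (i : Fin (2 * ν)) (h : i.val % 2 = 1) :
    (sK F ν *ᵥ v) i = -v ⟨i.val - 1, by have := i.isLt; omega⟩ := by
  show (fun j => sK F ν i j) ⬝ᵥ v = _
  rw [dotProduct, Finset.sum_eq_single (⟨i.val - 1, by have := i.isLt; omega⟩ : Fin (2 * ν))]
  · have : sK F ν i ⟨i.val - 1, by have := i.isLt; omega⟩ = -1 := by
      simp only [sK, of_apply]
      split_ifs with h2 h3
      · omega
      · rfl
      · simp at h3; omega
    rw [this]; ring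
  · intro j _ hj
    have hz : sK F ν i j = 0 := by
      simp only [sK, of_apply]
      split_ifs with h2 h3
      · omega
      · exact absurd (Fin.ext (by omega : j.val = i.val - 1)) hj
      · rfl
    simp [hz]
  · simp

lemma sK_alt (v : Fin (2 * ν) → F) : v ⬝ᵥ (sK F ν *ᵥ v) = 0 := by
  rw [dotProduct]
  apply Finset.sum_ninvolution (flip ν)
  · intro i
    rcases Nat.mod_two_eq_zero_or_one i.val with h | h
    · have h1 : i.val + 1 < 2 * ν := by have := i.isLt; omega
      have hf : flip ν i = ⟨i.val + 1, h1⟩ := by simp [flip, h]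
      rw [hf, sK_mulVec_even v i h h1, sK_mulVec_odd v ⟨i.val + 1, h1⟩ (by simpa using (by omega : (i.val + 1) % 2 = 1))]
      have : (⟨(⟨i.val + 1, h1⟩ : Fin (2 * ν)).val - 1, by omega⟩ : Fin (2 * ν)) = i := by
        apply Fin.ext; simp
      rw [this]; ring
    · have h1 : i.val - 1 < 2 * ν := by have := i.isLt; omega
      have hf : flip ν i = ⟨i.val - 1, h1⟩ := by simp [flip, h]
      rw [hf, sK_mulVec_odd v i h, sK_mulVec_even v ⟨i.val - 1, h1⟩ (by simp; omega) (by simp; omega)]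
      have : (⟨(⟨i.val - 1, h1⟩ : Fin (2 * ν)).val + 1, by simp; omega⟩ : Fin (2 * ν)) = i := by
        apply Fin.ext; simp; omega
      rw [this]; ring
  · intro i _
    intro hc
    apply_fun Fin.val at hc
    simp only [flip] at hc
    split_ifs at hc with h <;> simp at hc <;> omega
  · intro i; simp
  · intro i
    rcases Nat.mod_two_eq_zero_or_one i.val with h | h
    · have h1 : i.val + 1 < 2 * ν := by have := i.isLt; omega
      have hf : flip ν i = ⟨i.val + 1, h1⟩ := by simp [flip, h]
      rw [hf]
      have h2 : (⟨i.val + 1, h1⟩ : Fin (2 * ν)).val % 2 ≠ 0 := by simp; omega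
      apply Fin.ext
      simp [flip, h2]
    · have h1 : i.val - 1 < 2 * ν := by have := i.isLt; omega
      have hf : flip ν i = ⟨i.val - 1, h1⟩ := by simp [flip, h]
      rw [hf]
      have h2 : (⟨i.val - 1, h1⟩ : Fin (2 * ν)).val % 2 = 0 := by simp; omega
      apply Fin.ext
      simp [flip, h2]
      omega

lemma sK_skew (u w : Fin (2 * ν) → F) :
    u ⬝ᵥ (sK F ν *ᵥ w) = -(w ⬝ᵥ (sK F ν *ᵥ u)) := by
  have h := sK_alt (u + w)
  simp only [Matrix.mulVec_add, add_dotProduct, dotProduct_add, sK_alt] at h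
  linear_combination h

lemma adj_iff (x z : Projectivization F (Fin (2 * ν) → F)) :
    (SpG F ν).Adj x z ↔ z.rep ⬝ᵥ (sK F ν *ᵥ x.rep) ≠ 0 := by
  rw [SpG, SimpleGraph.fromRel_adj]
  constructor
  · rintro ⟨hne, h | h⟩
    · rw [sK_skew]; simpa using h
    · exact h
  · intro h
    refine ⟨?_, Or.inr h⟩
    rintro rfl
    exact h (sK_alt _)

end SpGAux

theorem common_neighbors_adj_SpG (q ν : ℕ) (F : Type) [Field F] [Fintype F]
    (hF : Fintype.card F = q) (hν : 1 ≤ ν)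
    (x y : Projectivization F (Fin (2 * ν) → F)) (hxy : (SpG F ν).Adj x y) :
    ((SpG F ν).neighborSet x ∩ (SpG F ν).neighborSet y).ncard
      = q ^ (2 * ν - 2) * (q - 1) := by
  classical
  have hq2 : 2 ≤ q := hF ▸ Fintype.one_lt_card
  set a := x.rep with ha
  set b := y.rep with hb
  have ht : b ⬝ᵥ (sK F ν *ᵥ a) ≠ 0 := (SpGAux.adj_iff x y).mp hxy
  set t := b ⬝ᵥ (sK F ν *ᵥ a) with htd
  have hab : a ⬝ᵥ (sK F ν *ᵥ b) = -t := by rw [SpGAux.sK_skew]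
  set H : (Fin (2 * ν) → F) → F × F :=
    fun v => (v ⬝ᵥ (sK F ν *ᵥ a), v ⬝ᵥ (sK F ν *ᵥ b)) with hH
  have Hadd : ∀ u v, H (u + v) = H u + H v := by
    intro u v; simp [hH, add_dotProduct, Prod.ext_iff]
  set s : F × F → (Fin (2 * ν) → F) :=
    fun p => (p.1 / t) • b + (-(p.2 / t)) • a with hs
  have hHs : ∀ p, H (s p) = p := by
    intro p
    have h1 : b ⬝ᵥ (sK F ν *ᵥ b) = 0 := SpGAux.sK_alt b
    have h2 : a ⬝ᵥ (sK F ν *ᵥ a) = 0 := SpGAux.sK_alt a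
    simp only [hH, hs, add_dotProduct, smul_dotProduct, smul_eq_mul, h1, h2, hab, ← htd]
    refine Prod.ext ?_ ?_ <;> simp <;> field_simp
  have Hsub0 : ∀ v, H (v - s (H v)) = 0 := by
    intro v
    have h := Hadd (v - s (H v)) (s (H v))
    rw [sub_add_cancel, hHs] at h
    exact right_eq_add.mp h
  -- kernel cardinality via full equivalence
  let e3 : (Fin (2 * ν) → F) ≃ ({v : Fin (2 * ν) → F // H v = 0} × (F × F)) :=
    { toFun := fun v => (⟨v - s (H v), Hsub0 v⟩, H v)
      invFun := fun kp => kp.1.1 + s kp.2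
      left_inv := by intro v; simp [sub_add_cancel]
      right_inv := by
        rintro ⟨⟨k, hk⟩, p⟩
        have h1 : H (k + s p) = p := by rw [Hadd, hk, hHs, zero_add]
        refine Prod.ext (Subtype.ext ?_) ?_ <;> simp [h1] }
  have hcardV : Nat.card (Fin (2 * ν) → F) = q ^ (2 * ν) := by
    simp [Nat.card_eq_fintype_card, hF]
  have hker : Nat.card {v : Fin (2 * ν) → F // H v = 0} = q ^ (2 * ν - 2) := by
    have hkq : Nat.card {v : Fin (2 * ν) → F // H v = 0} * q ^ 2 = q ^ (2 * ν) := by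
      rw [← hcardV, Nat.card_congr e3, Nat.card_prod]
      congr 1
      simp [Nat.card_eq_fintype_card, hF, sq]
    have h2 : q ^ (2 * ν - 2) * q ^ 2 = q ^ (2 * ν) := by
      rw [← pow_add]; congr 1; omega
    exact Nat.eq_of_mul_eq_mul_right (by positivity) (hkq.trans h2.symm)
  -- restricted equivalence
  let e2 : {v : Fin (2 * ν) → F // (H v).1 ≠ 0 ∧ (H v).2 ≠ 0} ≃
      ({v : Fin (2 * ν) → F // H v = 0} × {p : F × F // p.1 ≠ 0 ∧ p.2 ≠ 0}) :=
    { toFun := fun v => (⟨v.1 - s (H v.1), Hsub0 v.1⟩, ⟨H v.1, v.2⟩)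
      invFun := fun kp => ⟨kp.1.1 + s kp.2.1, by
        have h1 : H (kp.1.1 + s kp.2.1) = kp.2.1 := by rw [Hadd, kp.1.2, hHs, zero_add]
        rw [h1]; exact kp.2.2⟩
      left_inv := by rintro ⟨v, hv⟩; exact Subtype.ext (by simp [sub_add_cancel])
      right_inv := by
        rintro ⟨⟨k, hk⟩, ⟨p, hp⟩⟩
        have h1 : H (k + s p) = p := by rw [Hadd, hk, hHs, zero_add]
        refine Prod.ext (Subtype.ext ?_) (Subtype.ext ?_) <;> simp [h1] }
  have hU : Nat.card {p : F × F // p.1 ≠ 0 ∧ p.2 ≠ 0} = (q - 1) ^ 2 := by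
    rw [Nat.card_congr (Equiv.subtypeProdEquivProd (p := fun u : F => u ≠ 0) (q := fun w : F => w ≠ 0)), Nat.card_prod]
    have h1 : Nat.card {u : F // u ≠ 0} = q - 1 := by
      rw [← Nat.card_congr unitsEquivNeZero, Nat.card_units, Nat.card_eq_fintype_card, hF]
    rw [h1]; ring
  have hT : Nat.card {v : Fin (2 * ν) → F // (H v).1 ≠ 0 ∧ (H v).2 ≠ 0}
      = q ^ (2 * ν - 2) * (q - 1) ^ 2 := by
    rw [Nat.card_congr e2, Nat.card_prod, hker, hU]
  -- projective side
  set N : Set (Projectivization F (Fin (2 * ν) → F)) :=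
    (SpG F ν).neighborSet x ∩ (SpG F ν).neighborSet y with hNdef
  have hmemN : ∀ z, z ∈ N ↔ (H z.rep).1 ≠ 0 ∧ (H z.rep).2 ≠ 0 := by
    intro z
    simp only [hNdef, Set.mem_inter_iff, SimpleGraph.mem_neighborSet,
      SpGAux.adj_iff, hH]
    exact Iff.rfl
  let φ : ({z : Projectivization F (Fin (2 * ν) → F) // z ∈ N} × Fˣ) →
      {v : Fin (2 * ν) → F // (H v).1 ≠ 0 ∧ (H v).2 ≠ 0} :=
    fun zc => ⟨(zc.2 : F) • zc.1.1.rep, by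
      have hz := (hmemN zc.1.1).mp zc.1.2
      simp only [hH, smul_dotProduct, smul_eq_mul] at hz ⊢
      exact ⟨mul_ne_zero zc.2.ne_zero hz.1, mul_ne_zero zc.2.ne_zero hz.2⟩⟩
  have hφbij : Function.Bijective φ := by
    constructor
    · rintro ⟨⟨z, hz⟩, c⟩ ⟨⟨z', hz'⟩, c'⟩ h
      have h1 : (c : F) • z.rep = (c' : F) • z'.rep := congrArg Subtype.val h
      have hzz' : z = z' := by
        rw [← Projectivization.mk_rep z, ← Projectivization.mk_rep z',
          Projectivization.mk_eq_mk_iff]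
        refine ⟨c⁻¹ * c', ?_⟩
        rw [Units.smul_def, Units.val_mul, mul_smul, ← h1, smul_smul]
        simp
      subst hzz'
      have h2 : ((c : F) - (c' : F)) • z.rep = 0 := by
        rw [sub_smul, h1, sub_self]
      rcases smul_eq_zero.mp h2 with h3 | h3
      · have : (c : F) = (c' : F) := by linear_combination h3
        simp [Prod.ext_iff, Units.ext this]
      · exact absurd h3 z.rep_nonzero
    · rintro ⟨v, hv⟩
      have hv0 : v ≠ 0 := by
        rintro rfl
        simp [hH] at hv
      obtain ⟨d, hd⟩ : ∃ d : Fˣ, d • v = (Projectivization.mk F v hv0).rep :=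
        (Projectivization.mk_eq_mk_iff F _ _ _ hv0).mp
          (Projectivization.mk_rep (Projectivization.mk F v hv0))
      have hzN : Projectivization.mk F v hv0 ∈ N := by
        rw [hmemN, ← hd, Units.smul_def]
        simp only [hH, smul_dotProduct, smul_eq_mul] at hv ⊢
        exact ⟨mul_ne_zero d.ne_zero hv.1, mul_ne_zero d.ne_zero hv.2⟩
      refine ⟨(⟨Projectivization.mk F v hv0, hzN⟩, d⁻¹), Subtype.ext ?_⟩
      show ((d⁻¹ : Fˣ) : F) • (Projectivization.mk F v hv0).rep = v
      rw [← hd, Units.smul_def, smul_smul]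
      simp
  have hNFu : Nat.card {z // z ∈ N} * (q - 1) = q ^ (2 * ν - 2) * (q - 1) ^ 2 := by
    have hFn : Nat.card F = q := by rw [Nat.card_eq_fintype_card, hF]
    have := Nat.card_congr (Equiv.ofBijective φ hφbij)
    rw [Nat.card_prod, Nat.card_units, hFn, hT] at this
    exact this
  have hNcard : Nat.card {z // z ∈ N} = q ^ (2 * ν - 2) * (q - 1) := by
    refine Nat.eq_of_mul_eq_mul_right (by omega : 0 < q - 1) ?_
    rw [hNFu]; ring
  rw [← Nat.card_coe_set_eq]
  exact hNcard
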